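/- Consequence of precision: if two regular expressions p and p' over alphabet E recognize the same language, then for any interpretation into a quantale, I[p] = I[p']. -/

import Mathlib

/-- A quantale: a complete lattice with a monoid operation distributing over
arbitrary suprema in both arguments. -/
structure Quantale' (K : Type*) [CompleteLattice K] where
  mul : K → K → K
  one : K
  mul_assoc : ∀ a b c, mul (mul a b) c = mul a (mul b c)
  one_mul : ∀ a, mul one a = a
  mul_one : ∀ a, mul a one = a
  mul_sSup : ∀ (a : K) (S : Set K), mul a (sSup S) = sSup (Set.image (mul a) S)
  sSup_mul : ∀ (a : K) (S : Set K), mul (sSup S) a = sSup (Set.image (fun b => mul b a) S)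

/-- n-fold product in a quantale: `a^0 = 1`, `a^(n+1) = a^n ⊙ a`. -/
def Quantale'.pow {K : Type*} [CompleteLattice K] (Q : Quantale' K) (a : K) : ℕ → K
  | 0 => Q.one
  | n + 1 => Q.mul (Q.pow a n) a

/-- Iteration: `a⋆ = sup_{n ∈ ℕ} a^n`. -/
def Quantale'.star {K : Type*} [CompleteLattice K] (Q : Quantale' K) (a : K) : K :=
  ⨆ n, Q.pow a n

/-- Regular expressions over alphabet `E`. -/
inductive RegExp (E : Type*) where
  | zero : RegExp E
  | eps : RegExp E
  | char : E → RegExp E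
  | plus : RegExp E → RegExp E → RegExp E
  | cat : RegExp E → RegExp E → RegExp E
  | star : RegExp E → RegExp E

/-- The language of a regular expression. -/
def RegExp.lang {E : Type*} : RegExp E → Language E
  | .zero => 0
  | .eps => 1
  | .char e => {[e]}
  | .plus p q => p.lang + q.lang
  | .cat p q => p.lang * q.lang
  | .star p => KStar.kstar p.lang

/-- Interpretation of a regular expression in a quantale. -/
def Quantale'.interp {K : Type*} [CompleteLattice K] {E : Type*} (Q : Quantale' K)
    (sem : E → K) : RegExp E → K
  | .zero => ⊥
  | .eps => Q.one
  | .char e => sem e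
  | .plus p q => Q.interp sem p ⊔ Q.interp sem q
  | .cat p q => Q.mul (Q.interp sem p) (Q.interp sem q)
  | .star p => Q.star (Q.interp sem p)

/-- Interpretation of a word: `sem e₁ ⊙ ⋯ ⊙ sem eₙ` (the empty word is `1`). -/
def Quantale'.semWord {K : Type*} [CompleteLattice K] {E : Type*} (Q : Quantale' K)
    (sem : E → K) (w : List E) : K :=
  w.foldr (fun e k => Q.mul (sem e) k) Q.one

/-- Interpretation of a language: sup of interpretations of its words. -/
def Quantale'.langInterp {K : Type*} [CompleteLattice K] {E : Type*} (Q : Quantale' K)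
    (sem : E → K) (L : Language E) : K :=
  sSup (Q.semWord sem '' L)

namespace Quantale'

variable {K : Type*} [CompleteLattice K] {E : Type*} (Q : Quantale' K) (sem : E → K)

lemma semWord_append (u v : List E) :
    Q.semWord sem (u ++ v) = Q.mul (Q.semWord sem u) (Q.semWord sem v) := by
  induction u with
  | nil => simp [semWord, Q.one_mul]
  | cons a u ih => simp [semWord] at ih ⊢; rw [ih, Q.mul_assoc]

lemma langInterp_mul (L M : Language E) :
    Q.langInterp sem (L * M) = Q.mul (Q.langInterp sem L) (Q.langInterp sem M) := by
  unfold langInterp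
  rw [Q.sSup_mul]
  apply le_antisymm
  · apply sSup_le
    rintro _ ⟨w, hw, rfl⟩
    erw [Language.mem_mul] at hw
    obtain ⟨u, hu, v, hv, rfl⟩ := hw
    rw [Q.semWord_append]
    have h1 : Q.mul (Q.semWord sem u) (Q.semWord sem v)
        ≤ Q.mul (Q.semWord sem u) (sSup (Q.semWord sem '' M)) := by
      rw [Q.mul_sSup]; exact le_sSup ⟨_, ⟨v, hv, rfl⟩, rfl⟩
    exact h1.trans (le_sSup ⟨_, ⟨u, hu, rfl⟩, rfl⟩)
  · apply sSup_le
    rintro _ ⟨_, ⟨u, hu, rfl⟩, rfl⟩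
    dsimp only
    rw [Q.mul_sSup]
    apply sSup_le
    rintro _ ⟨_, ⟨v, hv, rfl⟩, rfl⟩
    rw [← Q.semWord_append]
    exact le_sSup ⟨u ++ v, Language.mem_mul.2 ⟨u, hu, v, hv, rfl⟩, rfl⟩

lemma langInterp_one : Q.langInterp sem 1 = Q.one := by
  unfold langInterp
  erw [show (1 : Language E) = {([] : List E)} from rfl, Set.image_singleton,
    sSup_singleton]
  rfl

lemma langInterp_pow (L : Language E) (n : ℕ) :
    Q.langInterp sem (L ^ n) = Q.pow (Q.langInterp sem L) n := by
  induction n with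
  | zero => simpa [Quantale'.pow] using Q.langInterp_one sem
  | succ n ih => rw [pow_succ, Q.langInterp_mul, ih]; rfl

lemma langInterp_eq_interp (p : RegExp E) :
    Q.langInterp sem p.lang = Q.interp sem p := by
  induction p with
  | zero =>
      show Q.langInterp sem 0 = ⊥
      rw [langInterp, show (0 : Language E) = (∅ : Set (List E)) from rfl,
        Set.image_empty, sSup_empty]
  | eps => exact Q.langInterp_one sem
  | char e =>
      show Q.langInterp sem {[e]} = sem e
      erw [langInterp, Set.image_singleton, sSup_singleton]
      show Q.mul (sem e) Q.one = sem e
      exact Q.mul_one _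
  | plus p q ihp ihq =>
      show Q.langInterp sem (p.lang + q.lang) = Q.interp sem p ⊔ Q.interp sem q
      rw [← ihp, ← ihq]
      unfold langInterp
      erw [← sSup_union, ← Set.image_union]
      rfl
  | cat p q ihp ihq =>
      show Q.langInterp sem (p.lang * q.lang) = Q.mul (Q.interp sem p) (Q.interp sem q)
      rw [← ihp, ← ihq, Q.langInterp_mul]
  | star p ih =>
      show Q.langInterp sem (KStar.kstar p.lang) = Q.star (Q.interp sem p)
      rw [← ih]
      unfold Quantale'.star
      rw [Language.kstar_eq_iSup_pow]
      apply le_antisymm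
      · apply sSup_le
        rintro _ ⟨w, hw, rfl⟩
        erw [Language.mem_iSup] at hw
        obtain ⟨n, hn⟩ := hw
        calc Q.semWord sem w ≤ Q.langInterp sem (p.lang ^ n) := le_sSup ⟨w, hn, rfl⟩
          _ = Q.pow (Q.langInterp sem p.lang) n := Q.langInterp_pow sem _ n
          _ ≤ _ := le_iSup _ n
      · apply iSup_le
        intro n
        rw [← Q.langInterp_pow sem]
        apply sSup_le
        rintro _ ⟨w, hw, rfl⟩
        refine le_sSup ⟨w, ?_, rfl⟩
        erw [Language.mem_iSup]
        exact ⟨n, hw⟩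

end Quantale'

/-- If two regular expressions recognize the same language, their interpretations
in any quantale coincide. -/
theorem quantale_lang_eq_interp_eq {K : Type*} [CompleteLattice K] {E : Type*}
    (Q : Quantale' K) (sem : E → K) (p p' : RegExp E) (h : p.lang = p'.lang) :
    Q.interp sem p = Q.interp sem p' := by
  rw [← Q.langInterp_eq_interp sem p, ← Q.langInterp_eq_interp sem p', h]
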